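/- (Deterministic core of Theorem 1.) Let k ≥ 1, let f_0, …, f_k : S×X×A → ℝ, let μ be a distribution on S×X×A, let β_1, …, β_k be distributions on X, let B ⊆ X, let ξ be a distribution on S×X×A, and let Q* : S×X×A → ℝ satisfy Q* = T Q*. Let m be a positive integer and σ₁ > 0, σ₂ ≥ 0, c₀ ≥ 1, C ≥ 0, V_max ≥ 0, ε₁ ≥ 0. Define ξ⁰ := ξ and ξ^{i+1} := P(ξ^i) × π_{f_{k−1−i},Q*} for i = 0, …, k−1. Assume: (i) β_j(x) ≥ σ₁ for all x ∈ B and all j = 1,…,k; (ii) |f_j(s,x,a) − Q*(s,x,a)| ≤ V_max for all j = 0,…,k and all (s,x,a); (iii) for each i = 0,…,k−1, ξ^i(s,a) ≤ C·μ(s,a) for all (s,a) (marginals) and Σ_{(s,x,a): x∉B} ξ^i(s,x,a) ≤ c₀ σ₂; (iv) for each i = 0,…,k−1, ‖f_{k−i} − T f_{k−i−1}‖²_{2, μ̄_{β_{k−i}}, B} ≤ ε₁. Then ‖f_k − Q*‖_{2,ξ} ≤ ((1−γ^k)/(1−γ)) · ( sqrt((m+1) C ε₁ / (m σ₁)) +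 sqrt(c₀ σ₂) V_max ) + γ^k V_max. -/

import Mathlib

open Finset

section Defs

variable {S X A : Type*} [Fintype S] [Fintype X] [Fintype A]

/-- A distribution on `S × X × A`, written in curried form. -/
def IsDist3 (ν : S → X → A → ℝ) : Prop :=
  (∀ s x a, 0 ≤ ν s x a) ∧ ∑ s, ∑ x, ∑ a, ν s x a = 1

/-- A distribution on `X`. -/
def IsDist1 (β : X → ℝ) : Prop := (∀ x, 0 ≤ β x) ∧ ∑ x, β x = 1

/-- A distribution on `S × X`. -/
def IsDist2 (η : S → X → ℝ) : Prop := (∀ s x, 0 ≤ η s x) ∧ ∑ s, ∑ x, η s x = 1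

/-- A Markov transition kernel `P(·|s,a)` on `S`. -/
def IsKernel (P : S → A → S → ℝ) : Prop :=
  (∀ s a s', 0 ≤ P s a s') ∧ ∀ s a, ∑ s', P s a s' = 1

/-- The `(s,a)`-marginal of a distribution on `S × X × A`. -/
def marginal (ν : S → X → A → ℝ) (s : S) (a : A) : ℝ := ∑ x, ν s x a

/-- The augmented distribution `μ̄_β` after generating `m` virtual samples per real sample. -/
noncomputable def augDist (μ : S → X → A → ℝ) (β : X → ℝ) (m : ℕ) (s : S) (x : X) (a : A) : ℝ :=
  (1 / ((m : ℝ) + 1)) * μ s x a + ((m : ℝ) / ((m : ℝ) + 1)) * marginal μ s a * β x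

/-- The weighted `L²(ν)` norm of `f : S × X × A → ℝ`. -/
noncomputable def norm2 (ν : S → X → A → ℝ) (f : S → X → A → ℝ) : ℝ :=
  Real.sqrt (∑ s, ∑ x, ∑ a, ν s x a * f s x a ^ 2)

/-- The `B`-restricted weighted `L²(ν)` norm (sum only over `x ∈ B`). -/
noncomputable def norm2B (ν : S → X → A → ℝ) (B : Finset X) (f : S → X → A → ℝ) : ℝ :=
  Real.sqrt (∑ s, ∑ x ∈ B, ∑ a, ν s x a * f s x a ^ 2)

/-- The weighted `L²(η)` norm of `h : S × X → ℝ`. -/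
noncomputable def norm2SX (η : S → X → ℝ) (h : S → X → ℝ) : ℝ :=
  Real.sqrt (∑ s, ∑ x, η s x * h s x ^ 2)

/-- `V_f(s,x) := min_{a ∈ A} f(s,x,a)`. -/
noncomputable def Vmin [Nonempty A] (f : S → X → A → ℝ) (s : S) (x : X) : ℝ :=
  Finset.univ.inf' Finset.univ_nonempty (f s x)

/-- The Bellman (optimality) operator `(T f)(s,x,a) = R(s,x,a) + γ Σ_{s'} P(s'|s,a) V_f(s', g(s,x,a,s'))`. -/
noncomputable def bellman [Nonempty A] (P : S → A → S → ℝ) (g : S → X → A → S → X)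
    (R : S → X → A → ℝ) (γ : ℝ) (f : S → X → A → ℝ) (s : S) (x : X) (a : A) : ℝ :=
  R s x a + γ * ∑ s', P s a s' * Vmin f s' (g s x a s')

/-- The pushforward distribution `P(ν)` on `S × X`. -/
noncomputable def pushforward [DecidableEq X] (P : S → A → S → ℝ) (g : S → X → A → S → X)
    (ν : S → X → A → ℝ) (s' : S) (x' : X) : ℝ :=
  ∑ s, ∑ x, ∑ a, ν s x a * P s a s' * (if x' = g s x a s' then 1 else 0)

/-- The product distribution `η × π` on `S × X × A` of a state distribution and a
deterministic policy. -/
def prodPolicy [DecidableEq A] (η : S → X → ℝ) (π : S → X → A) (s : S) (x : X) (a : A) : ℝ :=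
  η s x * (if a = π s x then 1 else 0)

/-- `π` is a selection of `argmin_a min{f(s,x,a), f'(s,x,a)}`. -/
def IsMinSelection (f f' : S → X → A → ℝ) (π : S → X → A) : Prop :=
  ∀ s x a, min (f s x (π s x)) (f' s x (π s x)) ≤ min (f s x a) (f' s x a)

end Defs

section Helpers
variable {ι : Type*}

lemma cauchyW (t : Finset ι) (w a b : ι → ℝ) (hw : ∀ i ∈ t, 0 ≤ w i) :
    ∑ i ∈ t, w i * (a i * b i) ≤
      Real.sqrt (∑ i ∈ t, w i * a i ^ 2) * Real.sqrt (∑ i ∈ t, w i * b i ^ 2) := by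
  have h := Real.sum_mul_le_sqrt_mul_sqrt t (fun i => Real.sqrt (w i) * a i)
      (fun i => Real.sqrt (w i) * b i)
  have e1 : ∑ i ∈ t, (Real.sqrt (w i) * a i) * (Real.sqrt (w i) * b i)
      = ∑ i ∈ t, w i * (a i * b i) :=
    Finset.sum_congr rfl fun i hi => by
      rw [show (Real.sqrt (w i) * a i) * (Real.sqrt (w i) * b i)
          = (Real.sqrt (w i) * Real.sqrt (w i)) * (a i * b i) by ring,
        Real.mul_self_sqrt (hw i hi)]
  have e2 : ∑ i ∈ t, (Real.sqrt (w i) * a i) ^ 2 = ∑ i ∈ t, w i * a i ^ 2 :=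
    Finset.sum_congr rfl fun i hi => by rw [mul_pow, Real.sq_sqrt (hw i hi)]
  have e3 : ∑ i ∈ t, (Real.sqrt (w i) * b i) ^ 2 = ∑ i ∈ t, w i * b i ^ 2 :=
    Finset.sum_congr rfl fun i hi => by rw [mul_pow, Real.sq_sqrt (hw i hi)]
  rw [e1, e2, e3] at h; exact h

lemma minkW (t : Finset ι) (w a b : ι → ℝ) (hw : ∀ i ∈ t, 0 ≤ w i) :
    Real.sqrt (∑ i ∈ t, w i * (a i + b i) ^ 2) ≤
      Real.sqrt (∑ i ∈ t, w i * a i ^ 2) + Real.sqrt (∑ i ∈ t, w i * b i ^ 2) := by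
  have hA : (0:ℝ) ≤ ∑ i ∈ t, w i * a i ^ 2 :=
    Finset.sum_nonneg fun i hi => mul_nonneg (hw i hi) (sq_nonneg _)
  have hB : (0:ℝ) ≤ ∑ i ∈ t, w i * b i ^ 2 :=
    Finset.sum_nonneg fun i hi => mul_nonneg (hw i hi) (sq_nonneg _)
  have hcs := cauchyW t w a b hw
  have key : ∑ i ∈ t, w i * (a i + b i) ^ 2
      ≤ (Real.sqrt (∑ i ∈ t, w i * a i ^ 2) + Real.sqrt (∑ i ∈ t, w i * b i ^ 2)) ^ 2 := by
    have e : ∑ i ∈ t, w i * (a i + b i) ^ 2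
        = (∑ i ∈ t, w i * a i ^ 2) + (∑ i ∈ t, w i * b i ^ 2)
          + 2 * ∑ i ∈ t, w i * (a i * b i) := by
      rw [Finset.sum_congr rfl (fun i (_ : i ∈ t) => show w i * (a i + b i) ^ 2
          = w i * a i ^ 2 + w i * b i ^ 2 + 2 * (w i * (a i * b i)) by ring),
        Finset.sum_add_distrib, Finset.sum_add_distrib, ← Finset.mul_sum]
    rw [e]
    nlinarith [Real.sq_sqrt hA, Real.sq_sqrt hB, Real.sqrt_nonneg (∑ i ∈ t, w i * a i ^ 2),
      Real.sqrt_nonneg (∑ i ∈ t, w i * b i ^ 2)]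
  calc Real.sqrt (∑ i ∈ t, w i * (a i + b i) ^ 2)
      ≤ Real.sqrt ((Real.sqrt (∑ i ∈ t, w i * a i ^ 2)
          + Real.sqrt (∑ i ∈ t, w i * b i ^ 2)) ^ 2) := Real.sqrt_le_sqrt key
    _ = _ := Real.sqrt_sq (by positivity)

lemma jensenW (t : Finset ι) (p u : ι → ℝ) (hp : ∀ i ∈ t, 0 ≤ p i)
    (hps : ∑ i ∈ t, p i = 1) :
    (∑ i ∈ t, p i * u i) ^ 2 ≤ ∑ i ∈ t, p i * u i ^ 2 := by
  have h := Finset.sum_mul_sq_le_sq_mul_sq t (fun i => Real.sqrt (p i))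
      (fun i => Real.sqrt (p i) * u i)
  have e1 : ∑ i ∈ t, Real.sqrt (p i) * (Real.sqrt (p i) * u i) = ∑ i ∈ t, p i * u i :=
    Finset.sum_congr rfl fun i hi => by
      rw [← mul_assoc, Real.mul_self_sqrt (hp i hi)]
  have e2 : ∑ i ∈ t, Real.sqrt (p i) ^ 2 = ∑ i ∈ t, p i :=
    Finset.sum_congr rfl fun i hi => Real.sq_sqrt (hp i hi)
  have e3 : ∑ i ∈ t, (Real.sqrt (p i) * u i) ^ 2 = ∑ i ∈ t, p i * u i ^ 2 :=
    Finset.sum_congr rfl fun i hi => by rw [mul_pow, Real.sq_sqrt (hp i hi)]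
  rw [e1, e2, e3, hps, one_mul] at h
  exact h

lemma inf'_sub_abs {A : Type*} [Fintype A] [Nonempty A] (f q : A → ℝ) (c : A)
    (hc : ∀ a, min (f c) (q c) ≤ min (f a) (q a)) :
    |Finset.univ.inf' Finset.univ_nonempty f - Finset.univ.inf' Finset.univ_nonempty q|
      ≤ |f c - q c| := by
  set Vf := Finset.univ.inf' Finset.univ_nonempty f with hVf
  set Vq := Finset.univ.inf' Finset.univ_nonempty q with hVq
  have hVfc : Vf ≤ f c := Finset.inf'_le _ (Finset.mem_univ c)
  have hVqc : Vq ≤ q c := Finset.inf'_le _ (Finset.mem_univ c)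
  have h1 : min (f c) (q c) ≤ Vf :=
    Finset.le_inf' _ _ fun a _ => le_trans (hc a) (min_le_left _ _)
  have h2 : min (f c) (q c) ≤ Vq :=
    Finset.le_inf' _ _ fun a _ => le_trans (hc a) (min_le_right _ _)
  have hla := le_abs_self (f c - q c)
  have hnla := neg_abs_le (f c - q c)
  rcases le_total (f c) (q c) with h | h
  · rw [min_eq_left h] at h1 h2
    rw [abs_sub_le_iff]
    constructor <;> linarith
  · rw [min_eq_right h] at h1 h2
    rw [abs_sub_le_iff]
    constructor <;> linarith

end Helpers

section Domain
variable {S X A : Type*} [Fintype S] [Fintype X] [Fintype A]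

lemma sum3_product (B : Finset X) (F : S → X → A → ℝ) :
    ∑ p ∈ (univ : Finset S) ×ˢ B ×ˢ (univ : Finset A), F p.1 p.2.1 p.2.2
      = ∑ s, ∑ x ∈ B, ∑ a, F s x a := by
  rw [Finset.sum_product]
  exact Finset.sum_congr rfl fun s _ => Finset.sum_product _ _ _

lemma isDist3_next [Nonempty A] [DecidableEq X] [DecidableEq A]
    (P : S → A → S → ℝ) (g : S → X → A → S → X) (hP : IsKernel P)
    (ν : S → X → A → ℝ) (hν : IsDist3 ν) (π : S → X → A) :
    IsDist3 (prodPolicy (pushforward P g ν) π) := by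
  obtain ⟨hν0, hν1⟩ := hν
  obtain ⟨hP0, hP1⟩ := hP
  have hpf0 : ∀ s' x', 0 ≤ pushforward P g ν s' x' := fun s' x' =>
    Finset.sum_nonneg fun s _ => Finset.sum_nonneg fun x _ => Finset.sum_nonneg fun a _ => by
      apply mul_nonneg (mul_nonneg (hν0 s x a) (hP0 s a s'))
      split <;> norm_num
  constructor
  · intro s x a
    exact mul_nonneg (hpf0 s x) (by split <;> norm_num)
  · have inner : ∀ s' x', ∑ a, prodPolicy (pushforward P g ν) π s' x' a
        = pushforward P g ν s' x' := by
      intro s' x'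
      unfold prodPolicy
      rw [← Finset.mul_sum, Finset.sum_ite_eq']
      simp
    calc ∑ s', ∑ x', ∑ a, prodPolicy (pushforward P g ν) π s' x' a
        = ∑ s', ∑ x', pushforward P g ν s' x' :=
          Finset.sum_congr rfl fun s' _ => Finset.sum_congr rfl fun x' _ => inner s' x'
      _ = ∑ s', ∑ s, ∑ x, ∑ a, ν s x a * P s a s' := by
          refine Finset.sum_congr rfl fun s' _ => ?_
          unfold pushforward
          rw [Finset.sum_comm]
          refine Finset.sum_congr rfl fun s _ => ?_
          rw [Finset.sum_comm]
          refine Finset.sum_congr rfl fun x _ => ?_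
          rw [Finset.sum_comm]
          refine Finset.sum_congr rfl fun a _ => ?_
          rw [← Finset.mul_sum, Finset.sum_ite_eq']
          simp
      _ = ∑ s, ∑ x, ∑ a, ν s x a := by
          rw [Finset.sum_comm]
          refine Finset.sum_congr rfl fun s _ => ?_
          rw [Finset.sum_comm]
          refine Finset.sum_congr rfl fun x _ => ?_
          rw [Finset.sum_comm]
          refine Finset.sum_congr rfl fun a _ => ?_
          rw [← Finset.mul_sum, hP1 s a, mul_one]
      _ = 1 := hν1

lemma pushforward_policy_sum [Nonempty A] [DecidableEq X] [DecidableEq A]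
    (P : S → A → S → ℝ) (g : S → X → A → S → X)
    (ν : S → X → A → ℝ) (π : S → X → A) (h : S → X → A → ℝ) :
    ∑ s', ∑ x', ∑ a, prodPolicy (pushforward P g ν) π s' x' a * h s' x' a ^ 2
      = ∑ s, ∑ x, ∑ a, ν s x a
          * ∑ s', P s a s' * h s' (g s x a s') (π s' (g s x a s')) ^ 2 := by
  have inner : ∀ s' x', ∑ a, prodPolicy (pushforward P g ν) π s' x' a * h s' x' a ^ 2
      = pushforward P g ν s' x' * h s' x' (π s' x') ^ 2 := by
    intro s' x'
    unfold prodPolicy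
    rw [Finset.sum_congr rfl (fun a (_ : a ∈ (univ : Finset A)) =>
      show pushforward P g ν s' x' * (if a = π s' x' then (1:ℝ) else 0) * h s' x' a ^ 2
        = if a = π s' x' then pushforward P g ν s' x' * h s' x' a ^ 2 else 0 by
          split <;> ring)]
    rw [Finset.sum_ite_eq']
    simp
  calc ∑ s', ∑ x', ∑ a, prodPolicy (pushforward P g ν) π s' x' a * h s' x' a ^ 2
      = ∑ s', ∑ x', pushforward P g ν s' x' * h s' x' (π s' x') ^ 2 :=
        Finset.sum_congr rfl fun s' _ => Finset.sum_congr rfl fun x' _ => inner s' x'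
    _ = ∑ s', ∑ s, ∑ x, ∑ a,
          ν s x a * P s a s' * h s' (g s x a s') (π s' (g s x a s')) ^ 2 := by
        refine Finset.sum_congr rfl fun s' _ => ?_
        unfold pushforward
        simp only [Finset.sum_mul]
        rw [Finset.sum_comm]
        refine Finset.sum_congr rfl fun s _ => ?_
        rw [Finset.sum_comm]
        refine Finset.sum_congr rfl fun x _ => ?_
        rw [Finset.sum_comm]
        refine Finset.sum_congr rfl fun a _ => ?_
        rw [Finset.sum_congr rfl (fun x' (_ : x' ∈ (univ : Finset X)) =>
          show ν s x a * P s a s' * (if x' = g s x a s' then (1:ℝ) else 0)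
                * h s' x' (π s' x') ^ 2
            = if x' = g s x a s'
                then ν s x a * P s a s' * h s' x' (π s' x') ^ 2 else 0 by
              split <;> ring)]
        rw [Finset.sum_ite_eq']
        simp
    _ = _ := by
        rw [Finset.sum_comm]
        refine Finset.sum_congr rfl fun s _ => ?_
        rw [Finset.sum_comm]
        refine Finset.sum_congr rfl fun x _ => ?_
        rw [Finset.sum_comm]
        refine Finset.sum_congr rfl fun a _ => ?_
        rw [Finset.mul_sum]
        exact Finset.sum_congr rfl fun s' _ => by ring

end Domain

section OneStep
variable {S X A : Type*} [Fintype S] [Fintype X] [Fintype A]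

set_option maxHeartbeats 1000000 in
lemma onestep [Nonempty A] [DecidableEq X] [DecidableEq A]
    (P : S → A → S → ℝ) (g : S → X → A → S → X) (R : S → X → A → ℝ) (γ : ℝ)
    (hP : IsKernel P) (hγ0 : 0 ≤ γ)
    (μ : S → X → A → ℝ) (hμ : IsDist3 μ)
    (β : X → ℝ) (B : Finset X)
    (ν : S → X → A → ℝ) (hν : IsDist3 ν)
    (Q f f' : S → X → A → ℝ)
    (hQ : ∀ s x a, Q s x a = bellman P g R γ Q s x a)
    (π : S → X → A) (hπ : IsMinSelection f' Q π)
    (m : ℕ) (hm : 0 < m)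
    (σ1 σ2 c0 C Vmax ε1 : ℝ)
    (hσ1 : 0 < σ1) (hC : 0 ≤ C) (hV : 0 ≤ Vmax)
    (hβcov : ∀ x ∈ B, σ1 ≤ β x)
    (hfbd : ∀ s x a, |f s x a - Q s x a| ≤ Vmax)
    (hmarg : ∀ s a, marginal ν s a ≤ C * marginal μ s a)
    (hatyp : ∑ s, ∑ x ∈ Bᶜ, ∑ a, ν s x a ≤ c0 * σ2)
    (hfit : (norm2B (augDist μ β m) B
        (fun s x a => f s x a - bellman P g R γ f' s x a)) ^ 2 ≤ ε1) :
    norm2 ν (fun s x a => f s x a - Q s x a)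
      ≤ (Real.sqrt (((m : ℝ) + 1) * C * ε1 / ((m : ℝ) * σ1))
          + Real.sqrt (c0 * σ2) * Vmax)
        + γ * norm2 (prodPolicy (pushforward P g ν) π)
            (fun s x a => f' s x a - Q s x a) := by
  obtain ⟨hν0, hν1⟩ := hν
  obtain ⟨hμ0, hμ1⟩ := hμ
  obtain ⟨hP0, hP1⟩ := hP
  have hm' : (0:ℝ) < (m:ℝ) := by exact_mod_cast hm
  -- Step 1 : split into B and Bᶜ
  have hSBc0 : (0:ℝ) ≤ ∑ s, ∑ x ∈ Bᶜ, ∑ a, ν s x a * (f s x a - Q s x a) ^ 2 :=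
    Finset.sum_nonneg fun s _ => Finset.sum_nonneg fun x _ => Finset.sum_nonneg fun a _ =>
      mul_nonneg (hν0 s x a) (sq_nonneg _)
  have hSB0 : (0:ℝ) ≤ ∑ s, ∑ x ∈ B, ∑ a, ν s x a * (f s x a - Q s x a) ^ 2 :=
    Finset.sum_nonneg fun s _ => Finset.sum_nonneg fun x _ => Finset.sum_nonneg fun a _ =>
      mul_nonneg (hν0 s x a) (sq_nonneg _)
  have hc0σ2 : (0:ℝ) ≤ c0 * σ2 :=
    le_trans (Finset.sum_nonneg fun s _ => Finset.sum_nonneg fun x _ =>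
      Finset.sum_nonneg fun a _ => hν0 s x a) hatyp
  have hsplit : norm2 ν (fun s x a => f s x a - Q s x a)
      ≤ norm2B ν B (fun s x a => f s x a - Q s x a) + Real.sqrt (c0 * σ2) * Vmax := by
    have hdec : ∑ s, ∑ x, ∑ a, ν s x a * (f s x a - Q s x a) ^ 2
        = (∑ s, ∑ x ∈ B, ∑ a, ν s x a * (f s x a - Q s x a) ^ 2)
          + ∑ s, ∑ x ∈ Bᶜ, ∑ a, ν s x a * (f s x a - Q s x a) ^ 2 := by
      rw [← Finset.sum_add_distrib]
      exact Finset.sum_congr rfl fun s _ =>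
        (Finset.sum_add_sum_compl B _).symm
    have hBc : ∑ s, ∑ x ∈ Bᶜ, ∑ a, ν s x a * (f s x a - Q s x a) ^ 2 ≤ (c0 * σ2) * Vmax ^ 2 := by
      calc ∑ s, ∑ x ∈ Bᶜ, ∑ a, ν s x a * (f s x a - Q s x a) ^ 2
          ≤ ∑ s, ∑ x ∈ Bᶜ, ∑ a, ν s x a * Vmax ^ 2 := by
            refine Finset.sum_le_sum fun s _ => Finset.sum_le_sum fun x _ =>
              Finset.sum_le_sum fun a _ => ?_
            refine mul_le_mul_of_nonneg_left ?_ (hν0 s x a)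
            calc (f s x a - Q s x a) ^ 2 = |f s x a - Q s x a| ^ 2 := (sq_abs _).symm
              _ ≤ Vmax ^ 2 := pow_le_pow_left₀ (abs_nonneg _) (hfbd s x a) 2
        _ = (∑ s, ∑ x ∈ Bᶜ, ∑ a, ν s x a) * Vmax ^ 2 := by
            simp only [← Finset.sum_mul]
        _ ≤ (c0 * σ2) * Vmax ^ 2 :=
            mul_le_mul_of_nonneg_right hatyp (sq_nonneg _)
    have hsqrtBc : Real.sqrt (∑ s, ∑ x ∈ Bᶜ, ∑ a, ν s x a * (f s x a - Q s x a) ^ 2)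
        ≤ Real.sqrt (c0 * σ2) * Vmax := by
      calc Real.sqrt (∑ s, ∑ x ∈ Bᶜ, ∑ a, ν s x a * (f s x a - Q s x a) ^ 2)
          ≤ Real.sqrt ((c0 * σ2) * Vmax ^ 2) := Real.sqrt_le_sqrt hBc
        _ = Real.sqrt (c0 * σ2) * Vmax := by
            rw [Real.sqrt_mul hc0σ2, Real.sqrt_sq hV]
    have hsum_le : Real.sqrt ((∑ s, ∑ x ∈ B, ∑ a, ν s x a * (f s x a - Q s x a) ^ 2)
          + ∑ s, ∑ x ∈ Bᶜ, ∑ a, ν s x a * (f s x a - Q s x a) ^ 2)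
        ≤ Real.sqrt (∑ s, ∑ x ∈ B, ∑ a, ν s x a * (f s x a - Q s x a) ^ 2)
          + Real.sqrt (∑ s, ∑ x ∈ Bᶜ, ∑ a, ν s x a * (f s x a - Q s x a) ^ 2) := by
      have h1 := Real.sq_sqrt hSB0
      have h2 := Real.sq_sqrt hSBc0
      have h3 := Real.sqrt_nonneg (∑ s, ∑ x ∈ B, ∑ a, ν s x a * (f s x a - Q s x a) ^ 2)
      have h4 := Real.sqrt_nonneg (∑ s, ∑ x ∈ Bᶜ, ∑ a, ν s x a * (f s x a - Q s x a) ^ 2)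
      calc Real.sqrt _ ≤ Real.sqrt ((Real.sqrt (∑ s, ∑ x ∈ B, ∑ a, ν s x a * (f s x a - Q s x a) ^ 2)
            + Real.sqrt (∑ s, ∑ x ∈ Bᶜ, ∑ a, ν s x a * (f s x a - Q s x a) ^ 2)) ^ 2) :=
            Real.sqrt_le_sqrt (by nlinarith)
        _ = _ := Real.sqrt_sq (by positivity)
    calc norm2 ν (fun s x a => f s x a - Q s x a)
        = Real.sqrt ((∑ s, ∑ x ∈ B, ∑ a, ν s x a * (f s x a - Q s x a) ^ 2)
            + ∑ s, ∑ x ∈ Bᶜ, ∑ a, ν s x a * (f s x a - Q s x a) ^ 2) := by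
          rw [norm2, hdec]
      _ ≤ _ := hsum_le
      _ ≤ norm2B ν B (fun s x a => f s x a - Q s x a) + Real.sqrt (c0 * σ2) * Vmax := by
          rw [norm2B]
          exact add_le_add (le_refl _) hsqrtBc
  -- Step 2 : triangle inequality on B
  have htri : norm2B ν B (fun s x a => f s x a - Q s x a)
      ≤ norm2B ν B (fun s x a => f s x a - bellman P g R γ f' s x a)
        + norm2B ν B (fun s x a => bellman P g R γ f' s x a - Q s x a) := by
    have hmk := minkW ((univ : Finset S) ×ˢ B ×ˢ (univ : Finset A))
      (fun p => ν p.1 p.2.1 p.2.2)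
      (fun p => f p.1 p.2.1 p.2.2 - bellman P g R γ f' p.1 p.2.1 p.2.2)
      (fun p => bellman P g R γ f' p.1 p.2.1 p.2.2 - Q p.1 p.2.1 p.2.2)
      (fun p _ => hν0 p.1 p.2.1 p.2.2)
    rw [Finset.sum_congr rfl (fun p (_ : p ∈ (univ : Finset S) ×ˢ B ×ˢ (univ : Finset A)) =>
      show ν p.1 p.2.1 p.2.2 * ((f p.1 p.2.1 p.2.2 - bellman P g R γ f' p.1 p.2.1 p.2.2)
          + (bellman P g R γ f' p.1 p.2.1 p.2.2 - Q p.1 p.2.1 p.2.2)) ^ 2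
        = ν p.1 p.2.1 p.2.2 * (f p.1 p.2.1 p.2.2 - Q p.1 p.2.1 p.2.2) ^ 2 by ring)] at hmk
    rw [norm2B, norm2B, norm2B, ← sum3_product B, ← sum3_product B, ← sum3_product B]
    exact hmk
  -- Step 3 : fitting-error bound on B
  have hfitB : norm2B ν B (fun s x a => f s x a - bellman P g R γ f' s x a)
      ≤ Real.sqrt (((m : ℝ) + 1) * C * ε1 / ((m : ℝ) * σ1)) := by
    have hK : (0:ℝ) ≤ ((m:ℝ) + 1) * C / ((m:ℝ) * σ1) := by positivity
    have hw : ∀ s a, ∀ x ∈ B, ν s x a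
        ≤ (((m:ℝ) + 1) * C / ((m:ℝ) * σ1)) * augDist μ β m s x a := by
      intro s a x hxB
      have h1 : ν s x a ≤ marginal ν s a :=
        Finset.single_le_sum (f := fun x => ν s x a) (fun x _ => hν0 s x a) (Finset.mem_univ x)
      have h3 : (0:ℝ) ≤ marginal μ s a := Finset.sum_nonneg fun x _ => hμ0 s x a
      have h4 : ((m:ℝ) / ((m:ℝ) + 1)) * marginal μ s a * σ1 ≤ augDist μ β m s x a := by
        have e : ((m:ℝ) / ((m:ℝ) + 1)) * marginal μ s a * σ1
            ≤ ((m:ℝ) / ((m:ℝ) + 1)) * marginal μ s a * β x :=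
          mul_le_mul_of_nonneg_left (hβcov x hxB) (by positivity)
        have e2 : (0:ℝ) ≤ (1 / ((m:ℝ) + 1)) * μ s x a :=
          mul_nonneg (by positivity) (hμ0 s x a)
        unfold augDist
        linarith
      have e3 : (((m:ℝ) + 1) * C / ((m:ℝ) * σ1))
            * (((m:ℝ) / ((m:ℝ) + 1)) * marginal μ s a * σ1) = C * marginal μ s a := by
        field_simp
      calc ν s x a ≤ C * marginal μ s a := h1.trans (hmarg s a)
        _ = (((m:ℝ) + 1) * C / ((m:ℝ) * σ1))
            * (((m:ℝ) / ((m:ℝ) + 1)) * marginal μ s a * σ1) := e3.symm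
        _ ≤ (((m:ℝ) + 1) * C / ((m:ℝ) * σ1)) * augDist μ β m s x a :=
            mul_le_mul_of_nonneg_left h4 hK
    have haug0 : (0:ℝ) ≤ ∑ s, ∑ x ∈ B, ∑ a,
        augDist μ β m s x a * (f s x a - bellman P g R γ f' s x a) ^ 2 := by
      refine Finset.sum_nonneg fun s _ => Finset.sum_nonneg fun x hx =>
        Finset.sum_nonneg fun a _ => mul_nonneg ?_ (sq_nonneg _)
      have hb : 0 ≤ β x := le_trans hσ1.le (hβcov x hx)
      have h3 : (0:ℝ) ≤ marginal μ s a := Finset.sum_nonneg fun x _ => hμ0 s x a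
      have := hμ0 s x a
      unfold augDist
      positivity
    have hfit' : ∑ s, ∑ x ∈ B, ∑ a,
        augDist μ β m s x a * (f s x a - bellman P g R γ f' s x a) ^ 2 ≤ ε1 := by
      rw [norm2B, Real.sq_sqrt haug0] at hfit
      exact hfit
    have hsum : ∑ s, ∑ x ∈ B, ∑ a, ν s x a * (f s x a - bellman P g R γ f' s x a) ^ 2
        ≤ (((m:ℝ) + 1) * C / ((m:ℝ) * σ1)) * ∑ s, ∑ x ∈ B, ∑ a,
            augDist μ β m s x a * (f s x a - bellman P g R γ f' s x a) ^ 2 := by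
      rw [Finset.mul_sum]
      refine Finset.sum_le_sum fun s _ => ?_
      rw [Finset.mul_sum]
      refine Finset.sum_le_sum fun x hx => ?_
      rw [Finset.mul_sum]
      refine Finset.sum_le_sum fun a _ => ?_
      rw [← mul_assoc]
      exact mul_le_mul_of_nonneg_right (hw s a x hx) (sq_nonneg _)
    have hKε : (((m:ℝ) + 1) * C / ((m:ℝ) * σ1)) * ε1
        = ((m:ℝ) + 1) * C * ε1 / ((m:ℝ) * σ1) := by ring
    calc norm2B ν B (fun s x a => f s x a - bellman P g R γ f' s x a)
        ≤ Real.sqrt ((((m:ℝ) + 1) * C / ((m:ℝ) * σ1)) * ε1) := by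
          rw [norm2B]
          exact Real.sqrt_le_sqrt (hsum.trans (mul_le_mul_of_nonneg_left hfit' hK))
      _ = _ := by rw [hKε]
  -- Step 4 : contraction step
  have hcontract : norm2B ν B (fun s x a => bellman P g R γ f' s x a - Q s x a)
      ≤ γ * norm2 (prodPolicy (pushforward P g ν) π)
          (fun s x a => f' s x a - Q s x a) := by
    have hptw : ∀ s x a, (bellman P g R γ f' s x a - Q s x a) ^ 2
        ≤ γ ^ 2 * ∑ s', P s a s'
            * (f' s' (g s x a s') (π s' (g s x a s'))
                - Q s' (g s x a s') (π s' (g s x a s'))) ^ 2 := by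
      intro s x a
      have hbell : bellman P g R γ f' s x a - Q s x a
          = γ * ∑ s', P s a s' * (Vmin f' s' (g s x a s') - Vmin Q s' (g s x a s')) := by
        rw [hQ s x a]
        unfold bellman
        rw [show ∑ s', P s a s' * (Vmin f' s' (g s x a s') - Vmin Q s' (g s x a s'))
            = (∑ s', P s a s' * Vmin f' s' (g s x a s'))
              - ∑ s', P s a s' * Vmin Q s' (g s x a s') from by
          rw [← Finset.sum_sub_distrib]
          exact Finset.sum_congr rfl fun s' _ => mul_sub _ _ _]
        ring
      have hj := jensenW (univ : Finset S) (fun s' => P s a s')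
        (fun s' => Vmin f' s' (g s x a s') - Vmin Q s' (g s x a s'))
        (fun s' _ => hP0 s a s') (hP1 s a)
      have hterm : ∀ s', (Vmin f' s' (g s x a s') - Vmin Q s' (g s x a s')) ^ 2
          ≤ (f' s' (g s x a s') (π s' (g s x a s'))
              - Q s' (g s x a s') (π s' (g s x a s'))) ^ 2 := by
        intro s'
        have habs := inf'_sub_abs (f' s' (g s x a s')) (Q s' (g s x a s'))
          (π s' (g s x a s')) (fun a' => hπ s' (g s x a s') a')
        calc (Vmin f' s' (g s x a s') - Vmin Q s' (g s x a s')) ^ 2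
            = |Vmin f' s' (g s x a s') - Vmin Q s' (g s x a s')| ^ 2 := (sq_abs _).symm
          _ ≤ |f' s' (g s x a s') (π s' (g s x a s'))
              - Q s' (g s x a s') (π s' (g s x a s'))| ^ 2 :=
              pow_le_pow_left₀ (abs_nonneg _) habs 2
          _ = _ := sq_abs _
      have hsum' : ∑ s', P s a s' * (Vmin f' s' (g s x a s') - Vmin Q s' (g s x a s')) ^ 2
          ≤ ∑ s', P s a s' * (f' s' (g s x a s') (π s' (g s x a s'))
              - Q s' (g s x a s') (π s' (g s x a s'))) ^ 2 :=
        Finset.sum_le_sum fun s' _ => mul_le_mul_of_nonneg_left (hterm s') (hP0 s a s')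
      rw [hbell, mul_pow]
      exact mul_le_mul_of_nonneg_left (hj.trans hsum') (sq_nonneg γ)
    have hS1 : (∑ s, ∑ x ∈ B, ∑ a, ν s x a * (bellman P g R γ f' s x a - Q s x a) ^ 2)
        ≤ ∑ s, ∑ x, ∑ a, ν s x a * (bellman P g R γ f' s x a - Q s x a) ^ 2 := by
      refine Finset.sum_le_sum fun s _ => ?_
      refine Finset.sum_le_sum_of_subset_of_nonneg (Finset.subset_univ B) fun x _ _ =>
        Finset.sum_nonneg fun a _ => mul_nonneg (hν0 s x a) (sq_nonneg _)
    have hS2 : ∑ s, ∑ x, ∑ a, ν s x a * (bellman P g R γ f' s x a - Q s x a) ^ 2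
        ≤ γ ^ 2 * ∑ s', ∑ x', ∑ a, prodPolicy (pushforward P g ν) π s' x' a
            * (f' s' x' a - Q s' x' a) ^ 2 := by
      rw [pushforward_policy_sum P g ν π (fun s x a => f' s x a - Q s x a)]
      rw [Finset.mul_sum]
      refine Finset.sum_le_sum fun s _ => ?_
      rw [Finset.mul_sum]
      refine Finset.sum_le_sum fun x _ => ?_
      rw [Finset.mul_sum]
      refine Finset.sum_le_sum fun a _ => ?_
      calc ν s x a * (bellman P g R γ f' s x a - Q s x a) ^ 2
          ≤ ν s x a * (γ ^ 2 * ∑ s', P s a s'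
              * (f' s' (g s x a s') (π s' (g s x a s'))
                  - Q s' (g s x a s') (π s' (g s x a s'))) ^ 2) :=
            mul_le_mul_of_nonneg_left (hptw s x a) (hν0 s x a)
        _ = γ ^ 2 * (ν s x a * ∑ s', P s a s'
              * (f' s' (g s x a s') (π s' (g s x a s'))
                  - Q s' (g s x a s') (π s' (g s x a s'))) ^ 2) := by ring
    calc norm2B ν B (fun s x a => bellman P g R γ f' s x a - Q s x a)
        ≤ Real.sqrt (γ ^ 2 * ∑ s', ∑ x', ∑ a, prodPolicy (pushforward P g ν) π s' x' a
            * (f' s' x' a - Q s' x' a) ^ 2) := by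
          rw [norm2B]
          exact Real.sqrt_le_sqrt (hS1.trans hS2)
      _ = γ * norm2 (prodPolicy (pushforward P g ν) π)
            (fun s x a => f' s x a - Q s x a) := by
          rw [norm2, Real.sqrt_mul (sq_nonneg γ), Real.sqrt_sq hγ0]
  -- Assemble
  calc norm2 ν (fun s x a => f s x a - Q s x a)
      ≤ norm2B ν B (fun s x a => f s x a - Q s x a) + Real.sqrt (c0 * σ2) * Vmax := hsplit
    _ ≤ (norm2B ν B (fun s x a => f s x a - bellman P g R γ f' s x a)
          + norm2B ν B (fun s x a => bellman P g R γ f' s x a - Q s x a))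
        + Real.sqrt (c0 * σ2) * Vmax := by linarith
    _ ≤ (Real.sqrt (((m : ℝ) + 1) * C * ε1 / ((m : ℝ) * σ1))
          + γ * norm2 (prodPolicy (pushforward P g ν) π)
              (fun s x a => f' s x a - Q s x a)) + Real.sqrt (c0 * σ2) * Vmax := by
        linarith
    _ = _ := by ring

end OneStep

set_option maxHeartbeats 1000000 in

/-- deterministic core of Theorem 1: iterating the per-step error bound
yields `‖f_k − Q*‖_{2,ξ} ≤ ((1−γ^k)/(1−γ)) (sqrt((m+1)Cε₁/(mσ₁)) + sqrt(c₀σ₂) V_max) + γ^k V_max`. -/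
theorem statement13 {S X A : Type*} [Fintype S] [Fintype X] [Fintype A]
    [Nonempty S] [Nonempty X] [Nonempty A] [DecidableEq X] [DecidableEq A]
    (P : S → A → S → ℝ) (g : S → X → A → S → X) (R : S → X → A → ℝ) (γ : ℝ)
    (hP : IsKernel P) (hγ0 : 0 ≤ γ) (hγ1 : γ < 1)
    (k : ℕ) (hk : 1 ≤ k)
    (fseq : ℕ → S → X → A → ℝ)
    (μ : S → X → A → ℝ) (hμ : IsDist3 μ)
    (βs : ℕ → X → ℝ) (hβdist : ∀ j, 1 ≤ j → j ≤ k → IsDist1 (βs j))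
    (B : Finset X)
    (ξ : S → X → A → ℝ) (hξ : IsDist3 ξ)
    (Q : S → X → A → ℝ) (hQ : ∀ s x a, Q s x a = bellman P g R γ Q s x a)
    (m : ℕ) (hm : 0 < m)
    (σ1 σ2 c0 C Vmax ε1 : ℝ)
    (hσ1 : 0 < σ1) (hσ2 : 0 ≤ σ2) (hc0 : 1 ≤ c0) (hC : 0 ≤ C) (hV : 0 ≤ Vmax) (hε1 : 0 ≤ ε1)
    -- a fixed selection `π_{f,f'} ∈ argmin_a min{f,f'}` for every pair of functions
    (πsel : (S → X → A → ℝ) → (S → X → A → ℝ) → S → X → A)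
    (hπsel : ∀ f f', IsMinSelection f f' (πsel f f'))
    -- the sequence ξ⁰ = ξ, ξ^{i+1} = P(ξ^i) × π_{f_{k−1−i},Q*}
    (ξseq : ℕ → S → X → A → ℝ)
    (hξ0 : ξseq 0 = ξ)
    (hξsucc : ∀ i < k, ξseq (i + 1)
      = prodPolicy (pushforward P g (ξseq i)) (πsel (fseq (k - 1 - i)) Q))
    -- (i) virtual-sample coverage of the typical set
    (hβcov : ∀ j, 1 ≤ j → j ≤ k → ∀ x ∈ B, σ1 ≤ βs j x)
    -- (ii) uniform boundedness of `f_j − Q*`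
    (hfbd : ∀ j ≤ k, ∀ s x a, |fseq j s x a - Q s x a| ≤ Vmax)
    -- (iii) concentrability and small atypical mass of each ξ^i
    (hconc : ∀ i < k, (∀ s a, marginal (ξseq i) s a ≤ C * marginal μ s a)
      ∧ ∑ s, ∑ x ∈ Bᶜ, ∑ a, ξseq i s x a ≤ c0 * σ2)
    -- (iv) per-iteration fitting error
    (hfit : ∀ i < k, (norm2B (augDist μ (βs (k - i)) m) B
        (fun s x a => fseq (k - i) s x a
          - bellman P g R γ (fseq (k - i - 1)) s x a)) ^ 2 ≤ ε1) :
    norm2 ξ (fun s x a => fseq k s x a - Q s x a)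
      ≤ ((1 - γ ^ k) / (1 - γ))
          * (Real.sqrt (((m : ℝ) + 1) * C * ε1 / ((m : ℝ) * σ1))
              + Real.sqrt (c0 * σ2) * Vmax)
        + γ ^ k * Vmax := by
  have hdists : ∀ i ≤ k, IsDist3 (ξseq i) := by
    intro i
    induction i with
    | zero => intro _; rw [hξ0]; exact hξ
    | succ n ih =>
      intro hn
      rw [hξsucc n (by omega)]
      exact isDist3_next P g hP _ (ih (by omega)) _
  set E := Real.sqrt (((m : ℝ) + 1) * C * ε1 / ((m : ℝ) * σ1))
      + Real.sqrt (c0 * σ2) * Vmax with hE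
  have hE0 : 0 ≤ E := by positivity
  have key : ∀ n ≤ k, norm2 (ξseq (k - n)) (fun s x a => fseq n s x a - Q s x a)
      ≤ (∑ i ∈ Finset.range n, γ ^ i) * E + γ ^ n * Vmax := by
    intro n
    induction n with
    | zero =>
      intro _
      simp only [Finset.range_zero, Finset.sum_empty, zero_mul, pow_zero, one_mul, zero_add,
        Nat.sub_zero]
      obtain ⟨hd0, hd1⟩ := hdists k le_rfl
      have hb : ∑ s, ∑ x, ∑ a, ξseq k s x a * (fseq 0 s x a - Q s x a) ^ 2 ≤ Vmax ^ 2 := by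
        calc ∑ s, ∑ x, ∑ a, ξseq k s x a * (fseq 0 s x a - Q s x a) ^ 2
            ≤ ∑ s, ∑ x, ∑ a, ξseq k s x a * Vmax ^ 2 := by
              refine Finset.sum_le_sum fun s _ => Finset.sum_le_sum fun x _ =>
                Finset.sum_le_sum fun a _ => ?_
              refine mul_le_mul_of_nonneg_left ?_ (hd0 s x a)
              calc (fseq 0 s x a - Q s x a) ^ 2 = |fseq 0 s x a - Q s x a| ^ 2 := (sq_abs _).symm
                _ ≤ Vmax ^ 2 := pow_le_pow_left₀ (abs_nonneg _) (hfbd 0 (by omega) s x a) 2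
          _ = (∑ s, ∑ x, ∑ a, ξseq k s x a) * Vmax ^ 2 := by
              simp only [← Finset.sum_mul]
          _ = Vmax ^ 2 := by rw [hd1, one_mul]
      calc norm2 (ξseq k) (fun s x a => fseq 0 s x a - Q s x a)
          ≤ Real.sqrt (Vmax ^ 2) := Real.sqrt_le_sqrt hb
        _ = Vmax := Real.sqrt_sq hV
    | succ n ih =>
      intro hn1
      have hik : k - n - 1 < k := by omega
      have hidx1 : k - (n + 1) = k - n - 1 := by omega
      have hidx2 : k - n - 1 + 1 = k - n := by omega
      have hidx3 : k - 1 - (k - n - 1) = n := by omega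
      have hidx4 : k - (k - n - 1) = n + 1 := by omega
      have hξs := hξsucc (k - n - 1) hik
      rw [hidx2, hidx3] at hξs
      have hf := hfit (k - n - 1) hik
      rw [hidx4] at hf
      have hidx5 : n + 1 - 1 = n := rfl
      rw [hidx5] at hf
      have hcon := hconc (k - n - 1) hik
      have step := onestep P g R γ ⟨hP.1, hP.2⟩ hγ0 μ hμ (βs (n + 1)) B (ξseq (k - n - 1))
        (hdists (k - n - 1) (by omega)) Q (fseq (n + 1)) (fseq n) hQ
        (πsel (fseq n) Q) (hπsel (fseq n) Q) m hm σ1 σ2 c0 C Vmax ε1 hσ1 hC hV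
        (hβcov (n + 1) (by omega) (by omega)) (hfbd (n + 1) (by omega)) hcon.1 hcon.2 hf
      rw [← hξs] at step
      rw [hidx1]
      have ihn := ih (by omega)
      calc norm2 (ξseq (k - n - 1)) (fun s x a => fseq (n + 1) s x a - Q s x a)
          ≤ E + γ * norm2 (ξseq (k - n)) (fun s x a => fseq n s x a - Q s x a) := step
        _ ≤ E + γ * ((∑ i ∈ Finset.range n, γ ^ i) * E + γ ^ n * Vmax) := by
            exact add_le_add (le_refl E) (mul_le_mul_of_nonneg_left ihn hγ0)
        _ = (∑ i ∈ Finset.range (n + 1), γ ^ i) * E + γ ^ (n + 1) * Vmax := by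
            rw [geom_sum_succ]
            ring
  have keyk := key k le_rfl
  rw [Nat.sub_self, hξ0] at keyk
  have hgeom : ∑ i ∈ Finset.range k, γ ^ i = (1 - γ ^ k) / (1 - γ) := by
    rw [geom_sum_eq hγ1.ne k,
      div_eq_div_iff (sub_ne_zero.mpr hγ1.ne) (sub_ne_zero.mpr (by linarith : (1:ℝ) ≠ γ))]
    ring
  rw [hgeom] at keyk
  exact keyk
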